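/- If the pair (r, s) is AC-equivalent to (a, b) in F₂ and the pair (u, v) is AC-equivalent to (a, b) in F₂, then the pair (r(u,v), s(u,v)) is AC-equivalent to (a, b) in F₂. -/

import Mathlib

/-- Elementary Andrews–Curtis moves on pairs of elements of the free group on two
generators: inverting a component, multiplying a component on the right by the other
component, and conjugating a component by an arbitrary element. -/
def ACPMove (p q : FreeGroup (Fin 2) × FreeGroup (Fin 2)) : Prop :=
  q = (p.1⁻¹, p.2) ∨ q = (p.1, p.2⁻¹) ∨
  q = (p.1 * p.2, p.2) ∨ q = (p.1, p.2 * p.1) ∨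
  (∃ w, q = (w * p.1 * w⁻¹, p.2)) ∨ (∃ w, q = (p.1, w * p.2 * w⁻¹))

/-- AC-equivalence of pairs: a finite sequence of elementary AC-moves. -/
def ACPEquiv (p q : FreeGroup (Fin 2) × FreeGroup (Fin 2)) : Prop :=
  Relation.ReflTransGen ACPMove p q

/-- Substitution: the image of `r` under the endomorphism of the free group on two
generators sending the first generator to `u` and the second to `v`. -/
def subst (u v r : FreeGroup (Fin 2)) : FreeGroup (Fin 2) :=
  FreeGroup.lift (fun i : Fin 2 => if i = 0 then u else v) r

theorem stmt_17
    (a b : FreeGroup (Fin 2)) (ha : a = FreeGroup.of 0) (hb : b = FreeGroup.of 1)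
    (r s u v : FreeGroup (Fin 2))
    (hrs : ACPEquiv (r, s) (a, b)) (huv : ACPEquiv (u, v) (a, b)) :
    ACPEquiv (subst u v r, subst u v s) (a, b) := by
  set φ : FreeGroup (Fin 2) →* FreeGroup (Fin 2) :=
    FreeGroup.lift (fun i : Fin 2 => if i = 0 then u else v) with hφ
  have hsub : ∀ x, subst u v x = φ x := fun x => rfl
  have key : ∀ p q : FreeGroup (Fin 2) × FreeGroup (Fin 2),
      ACPMove p q → ACPMove (φ p.1, φ p.2) (φ q.1, φ q.2) := by
    intro p q h
    rcases h with h | h | h | h | ⟨w, h⟩ | ⟨w, h⟩ <;> subst h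
    · exact Or.inl (by simp)
    · exact Or.inr (Or.inl (by simp))
    · exact Or.inr (Or.inr (Or.inl (by simp)))
    · exact Or.inr (Or.inr (Or.inr (Or.inl (by simp))))
    · exact Or.inr (Or.inr (Or.inr (Or.inr (Or.inl ⟨φ w, by simp⟩))))
    · exact Or.inr (Or.inr (Or.inr (Or.inr (Or.inr ⟨φ w, by simp⟩))))
  have h1 : ACPEquiv (φ r, φ s) (φ a, φ b) :=
    Relation.ReflTransGen.lift
      (fun p : FreeGroup (Fin 2) × FreeGroup (Fin 2) => (φ p.1, φ p.2)) key _ _ hrs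
  have ha' : φ a = u := by rw [ha]; simp [hφ]
  have hb' : φ b = v := by rw [hb]; simp [hφ]
  rw [hsub, hsub]
  rw [ha', hb'] at h1
  exact h1.trans huv
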